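/- Let G be a graph without isolated vertices, and let M be a nontrivial, unbounded graph matroid family with dimensionality d. Let k ≥ 2 be an integer. If the matroid M(G) is vertically k-connected, then the minimum degree of G is at least k + d − 1; in particular, |V(G)| ≥ k + d. -/

import Mathlib

/-!
Common framework: graph matroid families.

A finite simple graph (without isolated vertices) is identified with its edge
set: a finite set of non-diagonal elements of `Sym2 ℕ`.  A graph matroid
family is encoded, following the paper, as a finitary matroid on the edge set
of the countable complete graph on `ℕ` that is invariant under all
permutations of `ℕ`.
-/

/-- The set of vertices covered by a set of edges. -/
def eSupp (E : Set (Sym2 ℕ)) : Set ℕ := {v : ℕ | ∃ e ∈ E, v ∈ e}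

/-- The edge set of the complete graph on the vertex set `V`. -/
def clique (V : Set ℕ) : Set (Sym2 ℕ) := {e : Sym2 ℕ | ¬ e.IsDiag ∧ ∀ v ∈ e, v ∈ V}

/-- The edge set of the complete graph `K_n` on the vertices `0, …, n-1`. -/
def cliqueN (n : ℕ) : Set (Sym2 ℕ) := clique {v : ℕ | v < n}

/-- `E` is (the edge set of) a finite simple graph. -/
def IsGraph (E : Set (Sym2 ℕ)) : Prop := E.Finite ∧ ∀ e ∈ E, ¬ e.IsDiag

/-- The degree of the vertex `v` in the edge set `E`. -/
noncomputable def deg (E : Set (Sym2 ℕ)) (v : ℕ) : ℕ := {e ∈ E | v ∈ e}.ncard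

/-- The minimum degree of (the graph with) edge set `E` (whose vertex set is `eSupp E`). -/
noncomputable def minDeg (E : Set (Sym2 ℕ)) : ℕ := sInf {k : ℕ | ∃ v ∈ eSupp E, deg E v = k}

/-- Deleting a set `S` of vertices from the graph with edge set `E`. -/
def deleteVerts (E : Set (Sym2 ℕ)) (S : Set ℕ) : Set (Sym2 ℕ) := {e ∈ E | ∀ v ∈ e, v ∉ S}

/-- The graph with edge set `E` is `k`-connected: it has more than `k` vertices and
deleting any set of fewer than `k` vertices leaves a connected graph. -/
def KConnected (k : ℕ) (E : Set (Sym2 ℕ)) : Prop :=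
  k < (eSupp E).ncard ∧
  ∀ S : Finset ℕ, S.card < k →
    ((SimpleGraph.fromEdgeSet E).induce (eSupp E \ ↑S)).Connected

/-- `E` is a forest. -/
def IsForest (E : Set (Sym2 ℕ)) : Prop := (SimpleGraph.fromEdgeSet E).IsAcyclic

/-- `E` is a matching: no two distinct edges of `E` share a vertex. -/
def IsMatching (E : Set (Sym2 ℕ)) : Prop :=
  ∀ e ∈ E, ∀ f ∈ E, e ≠ f → ∀ v : ℕ, v ∈ e → v ∉ f

/-- `E` is a star `K_{1,m}` with `m` edges. -/
def IsStar (m : ℕ) (E : Set (Sym2 ℕ)) : Prop :=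
  ∃ (c : ℕ) (L : Finset ℕ), c ∉ L ∧ L.card = m ∧ E = (fun x => s(c, x)) '' ↑L

/-- `C` is a cycle graph `C_n` for some `n ≥ 3`. -/
def IsCycleGraph (C : Set (Sym2 ℕ)) : Prop :=
  ∃ n : ℕ, 3 ≤ n ∧ ∃ f : ZMod n → ℕ, Function.Injective f ∧
    C = {e : Sym2 ℕ | ∃ i : ZMod n, e = s(f i, f (i + 1))}

/-- The rank of the set `X` in the matroid `M₀`: the supremum of the cardinalities of
independent subsets of `X` (as a natural number; all sets we use are finite). -/
noncomputable def mrk (M₀ : Matroid (Sym2 ℕ)) (X : Set (Sym2 ℕ)) : ℕ :=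
  sSup {n : ℕ | ∃ I ⊆ X, M₀.Indep I ∧ I.ncard = n}

/-- A vertical `k`-separation of the matroid `M₀`. -/
def VerticalSep (M₀ : Matroid (Sym2 ℕ)) (k : ℕ) (E₁ E₂ : Set (Sym2 ℕ)) : Prop :=
  Disjoint E₁ E₂ ∧ E₁ ∪ E₂ = M₀.E ∧
  k ≤ mrk M₀ E₁ ∧ k ≤ mrk M₀ E₂ ∧
  mrk M₀ E₁ + mrk M₀ E₂ + 1 ≤ mrk M₀ M₀.E + k

/-- The matroid `M₀` is vertically `k`-connected. -/
def VerticallyConnected (M₀ : Matroid (Sym2 ℕ)) (k : ℕ) : Prop :=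
  k ≤ mrk M₀ M₀.E ∧
  ∀ k' : ℕ, 0 < k' → k' < k → ∀ E₁ E₂ : Set (Sym2 ℕ), ¬ VerticalSep M₀ k' E₁ E₂

/-- A `d`-dimensional abstract rigidity matroid on the complete graph with vertex set `V`. -/
def IsARM (d : ℕ) (V : Set ℕ) (M₀ : Matroid (Sym2 ℕ)) : Prop :=
  M₀.E = clique V ∧
  (∀ E₁ E₂ : Set (Sym2 ℕ), E₁ ⊆ clique V → E₂ ⊆ clique V →
      (eSupp E₁ ∩ eSupp E₂).ncard < d →
      M₀.closure (E₁ ∪ E₂) = M₀.closure E₁ ∪ M₀.closure E₂) ∧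
  (∀ E₁ E₂ : Set (Sym2 ℕ), E₁ ⊆ clique V → E₂ ⊆ clique V →
      d ≤ (eSupp E₁ ∩ eSupp E₂).ncard →
      M₀.closure E₁ = clique (eSupp E₁) → M₀.closure E₂ = clique (eSupp E₂) →
      M₀.closure (E₁ ∪ E₂) = clique (eSupp E₁ ∪ eSupp E₂))

/-- The `d`-dimensional edge split operation: replace an edge `uv` of `G` by a new
vertex `w` joined to `u` and `v`, as well as to `d - 1` other vertices of `G`. -/
def EdgeSplit (d : ℕ) (G G' : Set (Sym2 ℕ)) : Prop :=
  ∃ (u v w : ℕ) (X : Finset ℕ),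
    s(u, v) ∈ G ∧ w ∉ eSupp G ∧ ↑X ⊆ eSupp G ∧ X.card = d - 1 ∧ u ∉ X ∧ v ∉ X ∧
    G' = (G \ {s(u, v)}) ∪ {s(w, u), s(w, v)} ∪ ((fun x => s(w, x)) '' ↑X)

/-- A graph matroid family: a finitary matroid on the edge set of the countable
complete graph on `ℕ`, invariant under all permutations of `ℕ`. -/
structure GraphMatroidFamily where
  /-- The underlying matroid on the edge set of `K_ℕ`. -/
  M : Matroid (Sym2 ℕ)
  ground_eq : M.E = {e : Sym2 ℕ | ¬ e.IsDiag}
  finitary : M.Finitary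
  invariant : ∀ σ : Equiv.Perm ℕ, ∀ I : Set (Sym2 ℕ),
    M.Indep I → M.Indep (Sym2.map σ '' I)

namespace GraphMatroidFamily

variable (M : GraphMatroidFamily)

/-- The rank function of the family: `M.rk E` is the rank of the matroid `M(G)` for
any graph `G` whose edge set contains `E`. -/
noncomputable def rk (E : Set (Sym2 ℕ)) : ℕ := mrk M.M E

/-- A set of edges (a graph) is `M`-independent. -/
def Indep (E : Set (Sym2 ℕ)) : Prop := M.M.Indep E

/-- `C` is an `M`-circuit: a graph that is not `M`-independent, but such that deleting
any single edge from it yields an `M`-independent graph. -/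
def IsCircuit (C : Set (Sym2 ℕ)) : Prop :=
  IsGraph C ∧ ¬ M.Indep C ∧ ∀ e ∈ C, M.Indep (C \ {e})

/-- The graph with edge set `E` is `M`-rigid. -/
def Rigid (E : Set (Sym2 ℕ)) : Prop := M.rk E = M.rk (clique (eSupp E))

/-- The graph with vertex set `V` and edge set `E` is `M`-rigid. -/
def RigidOn (V : Set ℕ) (E : Set (Sym2 ℕ)) : Prop := M.rk E = M.rk (clique V)

/-- `M` is trivial if every (finite, simple) graph is `M`-independent. -/
def Trivial : Prop := ∀ E : Set (Sym2 ℕ), IsGraph E → M.Indep E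

/-- `M` is unbounded: the sequence `r(K_n)` is unbounded. -/
def Unbounded : Prop := ∀ B : ℕ, ∃ n : ℕ, B < M.rk (cliqueN n)

/-- `M` is bounded: the sequence `r(K_n)` is bounded. -/
def Bounded : Prop := ∃ B : ℕ, ∀ n : ℕ, M.rk (cliqueN n) ≤ B

/-- For a bounded family, `m` is the rank `r(M)` of `M`: the maximum (limit) of the
monotone sequence `r(K_n)`. -/
def HasRank (m : ℕ) : Prop :=
  (∀ n : ℕ, M.rk (cliqueN n) ≤ m) ∧ ∃ n : ℕ, M.rk (cliqueN n) = m

/-- `d` is the dimensionality of (the nontrivial family) `M`: the least `d` such that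
there is an `M`-circuit with minimum degree `d + 1`. -/
def IsDimensionality (d : ℕ) : Prop :=
  IsLeast {d : ℕ | ∃ C, M.IsCircuit C ∧ minDeg C = d + 1} d

/-- `t` is the threshold of (the nontrivial family) `M` with dimensionality `d`:
the least value of `|V(C)| - 1` over all `M`-circuits `C` with minimum degree `d + 1`. -/
def IsThreshold (d t : ℕ) : Prop :=
  IsLeast {t : ℕ | ∃ C, M.IsCircuit C ∧ minDeg C = d + 1 ∧ (eSupp C).ncard = t + 1} t

/-- `M` has the Lovász–Yemini property. -/
def LovaszYemini : Prop :=
  ∃ c : ℕ, ∀ E : Set (Sym2 ℕ), IsGraph E → KConnected c E → M.Rigid E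

/-- `ψ` is an isomorphism between the matroids `M(G)` and `M(H)`. -/
def MatroidIso (G H : Set (Sym2 ℕ)) (ψ : Sym2 ℕ → Sym2 ℕ) : Prop :=
  Set.BijOn ψ G H ∧ ∀ S ⊆ G, (M.Indep S ↔ M.Indep (ψ '' S))

/-- `G` is `M`-reconstructible: every isomorphism between `M(G)` and `M(H)` (for a graph
`H` without isolated vertices) is induced by a graph isomorphism. -/
def Reconstructible (G : Set (Sym2 ℕ)) : Prop :=
  ∀ H : Set (Sym2 ℕ), IsGraph H → ∀ ψ : Sym2 ℕ → Sym2 ℕ, M.MatroidIso G H ψ →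
    ∃ φ : ℕ → ℕ, Set.BijOn φ (eSupp G) (eSupp H) ∧ ∀ e ∈ G, ψ e = Sym2.map φ e

/-- `M` has the Whitney property. -/
def Whitney : Prop :=
  ∃ c : ℕ, ∀ E : Set (Sym2 ℕ), IsGraph E → KConnected c E → M.Reconstructible E

/-- `M` is the union of the graph matroid families `Ms`. -/
def IsUnionOf {k : ℕ} (Ms : Fin k → GraphMatroidFamily) : Prop :=
  ∀ I : Set (Sym2 ℕ),
    M.Indep I ↔ ∃ Is : Fin k → Set (Sym2 ℕ), (∀ i, (Ms i).Indep (Is i)) ∧ I = ⋃ i, Is i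

/-- `M` is a family of `d`-dimensional abstract rigidity matroids. -/
def FamilyOfARM (d : ℕ) : Prop :=
  ∀ n : ℕ, d ≤ n → IsARM d {v : ℕ | v < n} (M.M.restrict (cliqueN n))

/-- `M` is `1`-extendable: its dimensionality `d` is finite and positive, and the
`d`-dimensional edge split operation preserves `M`-independence. -/
def OneExtendable : Prop :=
  ∃ d : ℕ, 0 < d ∧ M.IsDimensionality d ∧
    ∀ G G' : Set (Sym2 ℕ), IsGraph G → M.Indep G → EdgeSplit d G G' → M.Indep G'

/-- `G` is `k`-vertex-redundantly `M`-rigid. -/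
def VertexRedundantlyRigid (k : ℕ) (G : Set (Sym2 ℕ)) : Prop :=
  M.Rigid G ∧ ∀ S : Finset ℕ, ↑S ⊆ eSupp G → S.card ≤ k →
    M.RigidOn (eSupp G \ ↑S) (deleteVerts G ↑S)

end GraphMatroidFamily


lemma exists_perm_extend (A : Finset ℕ) (g : ℕ → ℕ) (hg : Set.InjOn g A) :
    ∃ σ : Equiv.Perm ℕ, ∀ a ∈ A, σ a = g a := by
  classical
  induction A using Finset.induction_on with
  | empty => exact ⟨1, by simp⟩
  | @insert a A ha ih =>
    obtain ⟨σ', hσ'⟩ := ih (hg.mono (Finset.coe_subset.mpr (Finset.subset_insert a A)))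
    refine ⟨σ'.trans (Equiv.swap (σ' a) (g a)), ?_⟩
    intro x hx
    rcases Finset.mem_insert.mp hx with rfl | hx
    · simp
    · have hxa : x ≠ a := fun h => ha (h ▸ hx)
      have h1 : σ' x = g x := hσ' x hx
      have h2 : g x ≠ g a := fun h => hxa (hg (by simp [hx]) (by simp) h)
      have h3 : g x ≠ σ' a := fun h => hxa (σ'.injective (h1.trans h))
      simp only [Equiv.trans_apply, h1]
      exact Equiv.swap_apply_of_ne_of_ne h3 h2

lemma exists_injOn_finset (A : Finset ℕ) :
    ∀ (B : Finset ℕ), A.card ≤ B.card →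
    ∃ g : ℕ → ℕ, Set.InjOn g A ∧ ∀ a ∈ A, g a ∈ B := by
  classical
  induction A using Finset.induction_on with
  | empty => exact fun B _ => ⟨id, by simp, by simp⟩
  | @insert a A ha ih =>
    intro B hB
    rw [Finset.card_insert_of_notMem ha] at hB
    have hBne : B.Nonempty := Finset.card_pos.mp (by omega)
    obtain ⟨b, hb⟩ := hBne
    obtain ⟨g, hginj, hgmem⟩ := ih (B.erase b) (by rw [Finset.card_erase_of_mem hb]; omega)
    have hne : ∀ x ∈ A, x ≠ a := fun x hx h => ha (h ▸ hx)
    refine ⟨Function.update g a b, ?_, ?_⟩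
    · intro x hx y hy hxy
      simp only [Finset.coe_insert, Set.mem_insert_iff, Finset.mem_coe] at hx hy
      rcases hx with rfl | hx <;> rcases hy with rfl | hy
      · rfl
      · rw [Function.update_self, Function.update_of_ne (hne y hy)] at hxy
        exact absurd hxy.symm (Finset.ne_of_mem_erase (hgmem y hy))
      · rw [Function.update_self, Function.update_of_ne (hne x hx)] at hxy
        exact absurd hxy (Finset.ne_of_mem_erase (hgmem x hx))
      · rw [Function.update_of_ne (hne x hx), Function.update_of_ne (hne y hy)] at hxy
        exact hginj hx hy hxy
    · intro x hx
      rcases Finset.mem_insert.mp hx with rfl | hx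
      · simp [hb]
      · rw [Function.update_of_ne (hne x hx)]
        exact Finset.mem_of_mem_erase (hgmem x hx)
section Helpers

open Set

namespace S14

/-! ### Sym2 and graph helpers -/

lemma sym2_setOf_mem_finite (e : Sym2 ℕ) : {x : ℕ | x ∈ e}.Finite := by
  induction e using Sym2.ind with
  | _ a b =>
    have : {x : ℕ | x ∈ s(a, b)} = {a, b} := by
      ext x; simp [Sym2.mem_iff]
    rw [this]
    exact (Set.finite_singleton a).insert b |>.subset (by simp [Set.subset_def, or_comm])

lemma eSupp_finite {E : Set (Sym2 ℕ)} (hE : E.Finite) : (eSupp E).Finite := by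
  have : eSupp E = ⋃ e ∈ E, {x : ℕ | x ∈ e} := by
    ext x; simp [eSupp]
  rw [this]
  exact hE.biUnion fun e _ => sym2_setOf_mem_finite e

lemma map_not_isDiag {e : Sym2 ℕ} (he : ¬ e.IsDiag) {f : ℕ → ℕ}
    (hf : Function.Injective f) : ¬ (Sym2.map f e).IsDiag := by
  induction e using Sym2.ind with
  | _ a b =>
    rw [Sym2.map_pair_eq, Sym2.mk_isDiag_iff]
    rw [Sym2.mk_isDiag_iff] at he
    exact fun h => he (hf h)

/-! ### deg and minDeg helpers -/

lemma deg_eq (E : Set (Sym2 ℕ)) (v : ℕ) : deg E v = {e ∈ E | v ∈ e}.ncard := rfl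

lemma one_le_deg {E : Set (Sym2 ℕ)} (hE : E.Finite) {v : ℕ} (hv : v ∈ eSupp E) :
    1 ≤ deg E v := by
  obtain ⟨e, he, hve⟩ := hv
  rw [deg_eq]
  exact Set.ncard_pos (hE.subset (Set.sep_subset _ _)) |>.mpr ⟨e, he, hve⟩

lemma minDeg_le {E : Set (Sym2 ℕ)} {v : ℕ} (hv : v ∈ eSupp E) :
    minDeg E ≤ deg E v :=
  Nat.sInf_le ⟨v, hv, rfl⟩

lemma exists_minDeg {E : Set (Sym2 ℕ)} (hE : (eSupp E).Nonempty) :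
    ∃ v ∈ eSupp E, deg E v = minDeg E := by
  have h : {k : ℕ | ∃ v ∈ eSupp E, deg E v = k}.Nonempty :=
    ⟨deg E hE.choose, hE.choose, hE.choose_spec, rfl⟩
  exact Nat.sInf_mem h

/-! ### mrk helpers -/

lemma mrkSet_nonempty (M₀ : Matroid (Sym2 ℕ)) (X : Set (Sym2 ℕ)) :
    {n : ℕ | ∃ I ⊆ X, M₀.Indep I ∧ I.ncard = n}.Nonempty :=
  ⟨0, ∅, Set.empty_subset _, M₀.empty_indep, Set.ncard_empty _⟩

lemma mrkSet_bddAbove (M₀ : Matroid (Sym2 ℕ)) {X : Set (Sym2 ℕ)} (hX : X.Finite) :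
    BddAbove {n : ℕ | ∃ I ⊆ X, M₀.Indep I ∧ I.ncard = n} := by
  refine ⟨X.ncard, ?_⟩
  rintro n ⟨I, hIX, _, rfl⟩
  exact Set.ncard_le_ncard hIX hX

lemma le_mrk {M₀ : Matroid (Sym2 ℕ)} {X I : Set (Sym2 ℕ)} (hX : X.Finite)
    (hI : M₀.Indep I) (hIX : I ⊆ X) : I.ncard ≤ mrk M₀ X :=
  le_csSup (mrkSet_bddAbove M₀ hX) ⟨I, hIX, hI, rfl⟩

lemma exists_indep_mrk (M₀ : Matroid (Sym2 ℕ)) {X : Set (Sym2 ℕ)} (hX : X.Finite) :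
    ∃ I ⊆ X, M₀.Indep I ∧ I.ncard = mrk M₀ X :=
  Nat.sSup_mem (mrkSet_nonempty M₀ X) (mrkSet_bddAbove M₀ hX)

lemma mrk_le {M₀ : Matroid (Sym2 ℕ)} {X : Set (Sym2 ℕ)} {m : ℕ}
    (h : ∀ I ⊆ X, M₀.Indep I → I.ncard ≤ m) : mrk M₀ X ≤ m := by
  refine csSup_le (mrkSet_nonempty M₀ X) ?_
  rintro n ⟨I, hIX, hI, rfl⟩
  exact h I hIX hI

lemma mrk_le_ncard {M₀ : Matroid (Sym2 ℕ)} {X : Set (Sym2 ℕ)} (hX : X.Finite) :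
    mrk M₀ X ≤ X.ncard :=
  mrk_le fun I hIX _ => Set.ncard_le_ncard hIX hX

lemma mrk_mono {M₀ : Matroid (Sym2 ℕ)} {X Y : Set (Sym2 ℕ)} (hXY : X ⊆ Y)
    (hY : Y.Finite) : mrk M₀ X ≤ mrk M₀ Y :=
  mrk_le fun I hIX hI => le_mrk hY hI (hIX.trans hXY)

lemma mrk_indep {M₀ : Matroid (Sym2 ℕ)} {I : Set (Sym2 ℕ)} (hIf : I.Finite)
    (hI : M₀.Indep I) : mrk M₀ I = I.ncard :=
  le_antisymm (mrk_le_ncard hIf) (le_mrk hIf hI subset_rfl)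

lemma mrk_union_le {M₀ : Matroid (Sym2 ℕ)} {X Y : Set (Sym2 ℕ)} (hX : X.Finite)
    (hY : Y.Finite) : mrk M₀ (X ∪ Y) ≤ mrk M₀ X + Y.ncard := by
  refine mrk_le fun I hIXY hI => ?_
  have hIf : I.Finite := (hX.union hY).subset hIXY
  have h1 : I ⊆ (I ∩ X) ∪ (I \ X) := by
    intro e he
    by_cases hx : e ∈ X
    · exact Or.inl ⟨he, hx⟩
    · exact Or.inr ⟨he, hx⟩
  calc I.ncard ≤ ((I ∩ X) ∪ (I \ X)).ncard :=
        Set.ncard_le_ncard h1 ((hIf.inter_of_left X).union hIf.diff)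
    _ ≤ (I ∩ X).ncard + (I \ X).ncard := Set.ncard_union_le _ _
    _ ≤ mrk M₀ X + Y.ncard := by
        refine add_le_add (le_mrk hX (hI.subset Set.inter_subset_left) Set.inter_subset_right)
          (Set.ncard_le_ncard ?_ hY)
        intro e ⟨he, hx⟩
        rcases hIXY he with h | h
        · exact absurd h hx
        · exact h

lemma mrk_le_of_subset_closure {M₀ : Matroid (Sym2 ℕ)} {X Y : Set (Sym2 ℕ)}
    (hXE : X ⊆ M₀.E) (hX : X.Finite) (hY : Y.Finite) (hYX : Y ⊆ M₀.closure X) :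
    mrk M₀ Y ≤ mrk M₀ X := by
  obtain ⟨B, hB⟩ := M₀.exists_isBasis X hXE
  have hBX : B ⊆ X := hB.subset
  have hBf : B.Finite := hX.subset hBX
  refine mrk_le fun J hJY hJ => ?_
  have hJf : J.Finite := hY.subset hJY
  have hJcl : J ⊆ M₀.closure B := by
    rw [hB.closure_eq_closure]
    exact hJY.trans hYX
  have hcard : J.ncard ≤ B.ncard := by
    by_contra hlt
    push_neg at hlt
    have henc : B.encard < J.encard := by
      rw [← hBf.cast_ncard_eq, ← hJf.cast_ncard_eq]
      exact_mod_cast hlt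
    obtain ⟨f, hf, hfi⟩ := hB.indep.augment hJ henc
    have : f ∈ M₀.closure B := hJcl hf.1
    rcases (hB.indep.mem_closure_iff).mp this with hdep | hmem
    · exact hdep.not_indep hfi
    · exact hf.2 hmem
  exact hcard.trans (le_mrk hX hB.indep hBX)

lemma exists_minimal_dep (M₀ : Matroid (Sym2 ℕ)) :
    ∀ (n : ℕ) (X : Set (Sym2 ℕ)), X.ncard ≤ n → X.Finite → ¬ M₀.Indep X →
    ∃ D ⊆ X, ¬ M₀.Indep D ∧ ∀ e ∈ D, M₀.Indep (D \ {e}) := by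
  intro n
  induction n with
  | zero =>
    intro X hn hXf hdep
    rw [Nat.le_zero, Set.ncard_eq_zero hXf] at hn
    exact absurd (hn ▸ M₀.empty_indep) hdep
  | succ n ih =>
    intro X hn hXf hdep
    by_cases h : ∀ e ∈ X, M₀.Indep (X \ {e})
    · exact ⟨X, subset_rfl, hdep, h⟩
    · push_neg at h
      obtain ⟨e, he, hdep'⟩ := h
      have hlt : (X \ {e}).ncard < X.ncard := Set.ncard_diff_singleton_lt_of_mem he hXf
      obtain ⟨D, hD, h1, h2⟩ := ih (X \ {e}) (by omega) hXf.diff hdep'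
      exact ⟨D, hD.trans Set.diff_subset, h1, h2⟩

/-! ### clique helpers -/

lemma clique_finite {V : Set ℕ} (hV : V.Finite) : (clique V).Finite := by
  have h : clique V ⊆ Function.uncurry Sym2.mk '' (V ×ˢ V) := by
    intro e he
    induction e using Sym2.ind with
    | _ a b =>
      exact ⟨(a, b), ⟨he.2 a (by simp), he.2 b (by simp)⟩, rfl⟩
  exact ((hV.prod hV).image _).subset h

lemma cliqueN_finite (n : ℕ) : (cliqueN n).Finite :=
  clique_finite (Set.finite_Iio n)

lemma cliqueN_subset_ground (M : GraphMatroidFamily) (n : ℕ) :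
    cliqueN n ⊆ M.M.E := by
  intro e he
  rw [M.ground_eq]
  exact he.1

lemma cliqueN_mono {m n : ℕ} (h : m ≤ n) : cliqueN m ⊆ cliqueN n :=
  fun _ he => ⟨he.1, fun v hv => lt_of_lt_of_le (he.2 v hv) h⟩

/-! ### family-level helpers -/

lemma map_inv_image (σ : Equiv.Perm ℕ) (I : Set (Sym2 ℕ)) :
    Sym2.map ⇑σ⁻¹ '' (Sym2.map ⇑σ '' I) = I := by
  rw [Set.image_image]
  have h : ∀ x : Sym2 ℕ, Sym2.map ⇑σ⁻¹ (Sym2.map ⇑σ x) = x := by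
    intro x
    rw [Sym2.map_map]
    have h2 : (⇑σ⁻¹ ∘ ⇑σ) = id := by funext y; simp
    rw [h2, Sym2.map_id, id_eq]
  simp only [h, Set.image_id']

lemma indep_map_iff (M : GraphMatroidFamily) (σ : Equiv.Perm ℕ) (I : Set (Sym2 ℕ)) :
    M.M.Indep (Sym2.map ⇑σ '' I) ↔ M.M.Indep I := by
  refine ⟨fun h => ?_, fun h => M.invariant σ I h⟩
  have h2 := M.invariant σ⁻¹ _ h
  rwa [map_inv_image] at h2

lemma circuit_deg_ge {M : GraphMatroidFamily} {d : ℕ} (hd : M.IsDimensionality d)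
    {C : Set (Sym2 ℕ)} (hC : M.IsCircuit C) {v : ℕ} (hv : v ∈ eSupp C) :
    d + 1 ≤ deg C v := by
  obtain ⟨w, hw, hwdeg⟩ := exists_minDeg ⟨v, hv⟩
  have h1 : 1 ≤ minDeg C := hwdeg ▸ one_le_deg hC.1.1 hw
  have hmem : minDeg C - 1 ∈ {d : ℕ | ∃ C, M.IsCircuit C ∧ minDeg C = d + 1} :=
    ⟨C, hC, by omega⟩
  have h2 := hd.2 hmem
  have h3 := minDeg_le hv
  omega

/-- Any finite dependent set of edges contains an `M`-circuit. -/
lemma exists_circuit_subset {M : GraphMatroidFamily} {X : Set (Sym2 ℕ)}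
    (hXf : X.Finite) (hXd : ∀ e ∈ X, ¬ e.IsDiag) (hdep : ¬ M.M.Indep X) :
    ∃ D ⊆ X, M.IsCircuit D := by
  obtain ⟨D, hDX, h1, h2⟩ := exists_minimal_dep M.M X.ncard X le_rfl hXf hdep
  exact ⟨D, hDX, ⟨⟨hXf.subset hDX, fun e he => hXd e (hDX he)⟩, h1, h2⟩⟩

/-- A nontrivial unbounded graph matroid family has positive dimensionality. -/
lemma dim_pos {M : GraphMatroidFamily} {d : ℕ} (hu : M.Unbounded)
    (hd : M.IsDimensionality d) : 1 ≤ d := by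
  by_contra hd1
  have hd0 : d = 0 := by omega
  subst hd0
  obtain ⟨C, hC, hmC⟩ := hd.1
  have hCf : C.Finite := hC.1.1
  have hCne : C.Nonempty := by
    rcases Set.eq_empty_or_nonempty C with rfl | h
    · exact absurd M.M.empty_indep hC.2.1
    · exact h
  have hsne : (eSupp C).Nonempty := by
    obtain ⟨e, he⟩ := hCne
    exact ⟨e.out.1, e, he, Sym2.out_fst_mem e⟩
  obtain ⟨v, hv, hvdeg⟩ := exists_minDeg hsne
  rw [hmC] at hvdeg
  have hone : {e ∈ C | v ∈ e}.ncard = 1 := by rw [← deg_eq]; omega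
  obtain ⟨e₀, he₀⟩ := Set.ncard_eq_one.mp hone
  have he₀mem : e₀ ∈ {e ∈ C | v ∈ e} := by rw [he₀]; exact Set.mem_singleton _
  have he₀C : e₀ ∈ C := he₀mem.1
  have hve₀ : v ∈ e₀ := he₀mem.2
  obtain ⟨u, hu0⟩ := Sym2.mem_iff_exists.mp hve₀
  have huv : u ≠ v := by
    intro h
    apply hC.1.2 e₀ he₀C
    rw [hu0, h]
    exact Sym2.mk_isDiag_iff.mpr rfl
  set I : Set (Sym2 ℕ) := C \ {e₀} with hIdef
  have hI : M.M.Indep I := hC.2.2 e₀ he₀C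
  have hIf : I.Finite := hCf.diff
  have hIC : I ⊆ C := Set.diff_subset
  have hvI : v ∉ eSupp I := by
    rintro ⟨f, hf, hvf⟩
    have hmem : f ∈ {e ∈ C | v ∈ e} := ⟨hIC hf, hvf⟩
    rw [he₀] at hmem
    exact hf.2 hmem
  have hsuppIf : (eSupp I).Finite := eSupp_finite hIf
  set F : Finset ℕ := insert u hsuppIf.toFinset with hFdef
  have hsuppIF : ∀ x ∈ eSupp I, x ∈ F :=
    fun x hx => Finset.mem_insert_of_mem (hsuppIf.mem_toFinset.mpr hx)
  have huF : u ∈ F := Finset.mem_insert_self _ _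
  have hvF : v ∉ F := by
    intro h
    rcases Finset.mem_insert.mp h with h | h
    · exact huv h.symm
    · exact hvI (hsuppIf.mem_toFinset.mp h)
  set n₀ := F.card with hn₀
  have key : ∀ n, n₀ ≤ n → ∀ x, x < n → s(x, n) ∈ M.M.closure (cliqueN n) := by
    intro n hn x hx
    obtain ⟨g, hginj, hgmem⟩ := exists_injOn_finset (F.erase u) ((Finset.range n).erase x)
      (by rw [Finset.card_erase_of_mem huF, Finset.card_erase_of_mem (Finset.mem_range.mpr hx),
          Finset.card_range]; omega)
    set g2 : ℕ → ℕ := Function.update (Function.update g u x) v n with hg2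
    have hg2v : g2 v = n := Function.update_self _ _ _
    have hg2u : g2 u = x := by
      rw [hg2, Function.update_of_ne huv, Function.update_self]
    have hg2mem : ∀ w ∈ F, w ≠ u → g2 w ∈ (Finset.range n).erase x := by
      intro w hw hwu
      have hwv : w ≠ v := fun h => hvF (h ▸ hw)
      rw [hg2, Function.update_of_ne hwv, Function.update_of_ne hwu]
      exact hgmem w (Finset.mem_erase.mpr ⟨hwu, hw⟩)
    have hg2inj : Set.InjOn g2 ↑(insert v F) := by
      intro p hp q hq hpq
      simp only [Finset.coe_insert, Set.mem_insert_iff, Finset.mem_coe] at hp hq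
      by_cases hpv : p = v <;> by_cases hqv : q = v
      · rw [hpv, hqv]
      · exfalso
        have hqF : q ∈ F := hq.resolve_left hqv
        rw [hpv, hg2v] at hpq
        by_cases hqu : q = u
        · rw [hqu, hg2u] at hpq; omega
        · have := Finset.mem_range.mp (Finset.mem_of_mem_erase (hg2mem q hqF hqu))
          omega
      · exfalso
        have hpF : p ∈ F := hp.resolve_left hpv
        rw [hqv, hg2v] at hpq
        by_cases hpu : p = u
        · rw [hpu, hg2u] at hpq; omega
        · have := Finset.mem_range.mp (Finset.mem_of_mem_erase (hg2mem p hpF hpu))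
          omega
      · have hpF : p ∈ F := hp.resolve_left hpv
        have hqF : q ∈ F := hq.resolve_left hqv
        by_cases hpu : p = u <;> by_cases hqu : q = u
        · rw [hpu, hqu]
        · exfalso
          rw [hpu, hg2u] at hpq
          exact Finset.ne_of_mem_erase (hg2mem q hqF hqu) hpq.symm
        · exfalso
          rw [hqu, hg2u] at hpq
          exact Finset.ne_of_mem_erase (hg2mem p hpF hpu) hpq
        · have hpv' : p ≠ v := hpv
          have hqv' : q ≠ v := hqv
          rw [hg2, Function.update_of_ne hpv', Function.update_of_ne hpu,
            Function.update_of_ne hqv', Function.update_of_ne hqu] at hpq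
          exact hginj (by simp [Finset.mem_erase, hpu, hpF])
            (by simp [Finset.mem_erase, hqu, hqF]) hpq
    obtain ⟨σ, hσ⟩ := exists_perm_extend (insert v F) g2 hg2inj
    have hσv : σ v = n := by rw [hσ v (Finset.mem_insert_self _ _), hg2v]
    have hσu : σ u = x := by rw [hσ u (Finset.mem_insert_of_mem huF), hg2u]
    have hσI : ∀ w ∈ eSupp I, σ w < n := by
      intro w hw
      have hwF := hsuppIF w hw
      rw [hσ w (Finset.mem_insert_of_mem hwF)]
      by_cases hwu : w = u
      · rw [hwu, hg2u]; exact hx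
      · exact Finset.mem_range.mp (Finset.mem_of_mem_erase (hg2mem w hwF hwu))
    set J := Sym2.map ⇑σ '' I with hJdef
    have hJindep : M.M.Indep J := M.invariant σ I hI
    have hJsub : J ⊆ cliqueN n := by
      rintro e' ⟨f, hf, rfl⟩
      refine ⟨map_not_isDiag (hC.1.2 f (hIC hf)) σ.injective, ?_⟩
      intro w hw
      rw [Sym2.mem_map] at hw
      obtain ⟨a, haf, rfl⟩ := hw
      exact hσI a ⟨f, hf, haf⟩
    have himg : Sym2.map ⇑σ '' C = insert s(x, n) J := by
      have hC' : C = insert e₀ I := by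
        rw [hIdef, Set.insert_diff_singleton, Set.insert_eq_of_mem he₀C]
      rw [hC', Set.image_insert_eq]
      congr 1
      rw [hu0, Sym2.map_pair_eq, hσv, hσu, Sym2.eq_swap]
    have hdep' : ¬ M.M.Indep (insert s(x, n) J) := by
      rw [← himg, indep_map_iff]
      exact hC.2.1
    have hxn : s(x, n) ∈ M.M.closure J := by
      rw [hJindep.mem_closure_iff]
      left
      refine ⟨hdep', ?_⟩
      intro e' he'
      rw [M.ground_eq]
      rcases Set.mem_insert_iff.mp he' with rfl | he'
      · simp only [Set.mem_setOf_eq]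
        rw [Sym2.mk_isDiag_iff]
        omega
      · exact (hJsub he').1
    exact M.M.closure_subset_closure hJsub hxn
  have step : ∀ n, n₀ ≤ n → mrk M.M (cliqueN (n + 1)) ≤ mrk M.M (cliqueN n) := by
    intro n hn
    refine mrk_le_of_subset_closure (cliqueN_subset_ground M n) (cliqueN_finite n)
      (cliqueN_finite (n + 1)) ?_
    intro e
    induction e using Sym2.ind with
    | _ a b =>
      intro he
      have hab : a ≠ b := fun h => he.1 (Sym2.mk_isDiag_iff.mpr h)
      have ha : a < n + 1 := he.2 a (by simp)
      have hb : b < n + 1 := he.2 b (by simp)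
      by_cases han : a = n
      · have hbn : b < n := by omega
        rw [han, Sym2.eq_swap]
        exact key n hn b hbn
      · by_cases hbn : b = n
        · have han' : a < n := by omega
          rw [hbn]
          exact key n hn a han'
        · refine M.M.subset_closure (cliqueN n) (cliqueN_subset_ground M n) ?_
          refine ⟨he.1, fun w hw => ?_⟩
          rcases Sym2.mem_iff.mp hw with h | h <;> simp only [Set.mem_setOf_eq] <;> omega
  have bound : ∀ n, mrk M.M (cliqueN n) ≤ mrk M.M (cliqueN n₀) := by
    intro n
    induction n with
    | zero => exact mrk_mono (cliqueN_mono (Nat.zero_le _)) (cliqueN_finite n₀)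
    | succ n ih =>
      rcases le_or_gt n₀ n with h | h
      · exact (step n h).trans ih
      · exact mrk_mono (cliqueN_mono h) (cliqueN_finite n₀)
  obtain ⟨n, hn⟩ := hu (mrk M.M (cliqueN n₀))
  have hrk : M.rk (cliqueN n) = mrk M.M (cliqueN n) := rfl
  rw [hrk] at hn
  exact absurd hn (not_lt.mpr (bound n))

lemma mrk_restrict {M₀ : Matroid (Sym2 ℕ)} {G X : Set (Sym2 ℕ)} (hXG : X ⊆ G) :
    mrk (M₀.restrict G) X = mrk M₀ X := by
  unfold mrk
  congr 1
  ext n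
  constructor
  · rintro ⟨I, hIX, hI, rfl⟩
    exact ⟨I, hIX, (Matroid.restrict_indep_iff.mp hI).1, rfl⟩
  · rintro ⟨I, hIX, hI, rfl⟩
    exact ⟨I, hIX, Matroid.restrict_indep_iff.mpr ⟨hI, hIX.trans hXG⟩, rfl⟩

end S14

end Helpers
/-- Let `G` be a graph (without isolated vertices) and `M` a
nontrivial, unbounded graph matroid family with dimensionality `d`.  Let `k ≥ 2`.
If `M(G)` is vertically `k`-connected, then the minimum degree of `G` is at least
`k + d - 1`; in particular `G` has at least `k + d` vertices. -/
theorem vertically_connected_min_degree (M : GraphMatroidFamily) (d : ℕ)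
    (hu : M.Unbounded) (hnt : ¬ M.Trivial) (hd : M.IsDimensionality d)
    (G : Set (Sym2 ℕ)) (hG : IsGraph G) (k : ℕ) (hk : 2 ≤ k)
    (hvc : VerticallyConnected (M.M.restrict G) k) :
    (∀ v ∈ eSupp G, k + d ≤ deg G v + 1) ∧ k + d ≤ (eSupp G).ncard := by
  classical
  obtain ⟨hGfin, hGdiag⟩ := hG
  have d1 : 1 ≤ d := S14.dim_pos hu hd
  set M₀ := M.M.restrict G with hM₀def
  have hM₀E : M₀.E = G := Matroid.restrict_ground_eq
  have hmrkres : ∀ X, X ⊆ G → mrk M₀ X = mrk M.M X := fun X hX => S14.mrk_restrict hX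
  have hrGk : k ≤ mrk M.M G := by
    have h := hvc.1
    rwa [hM₀E, hmrkres G subset_rfl] at h
  have nosep := hvc.2
  have hsingle : ∀ e ∈ G, M.M.Indep {e} := by
    intro e he
    by_contra hdep
    obtain ⟨D, hDe, hD⟩ := S14.exists_circuit_subset (Set.finite_singleton e)
      (fun f hf => by rw [Set.mem_singleton_iff.mp hf]; exact hGdiag e he) hdep
    have hDne : D.Nonempty := by
      rcases Set.eq_empty_or_nonempty D with rfl | h
      · exact absurd M.M.empty_indep hD.2.1
      · exact h
    obtain ⟨f, hf⟩ := hDne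
    have haD : f.out.1 ∈ eSupp D := ⟨f, hf, Sym2.out_fst_mem f⟩
    have hdeg1 : deg D f.out.1 ≤ 1 := by
      rw [S14.deg_eq]
      refine le_trans (Set.ncard_le_ncard ?_ (Set.finite_singleton e)) (by simp)
      exact fun x hx => hDe hx.1
    have := S14.circuit_deg_ge hd hD haD
    omega
  have main : ∀ v ∈ eSupp G, k + d ≤ deg G v + 1 := by
    intro v hv
    by_contra hcon
    push_neg at hcon
    set E₁ : Set (Sym2 ℕ) := {e ∈ G | v ∈ e} with hE₁def
    set E₂ : Set (Sym2 ℕ) := G \ E₁ with hE₂def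
    set t := deg G v with ht
    have htE₁ : E₁.ncard = t := rfl
    have hE₁G : E₁ ⊆ G := Set.sep_subset _ _
    have hE₂G : E₂ ⊆ G := Set.diff_subset
    have hE₁f : E₁.Finite := hGfin.subset hE₁G
    have hE₂f : E₂.Finite := hGfin.subset hE₂G
    have hdisj : Disjoint E₁ E₂ := Set.disjoint_sdiff_right
    have hunion : E₁ ∪ E₂ = G := Set.union_diff_cancel hE₁G
    have hunion' : E₁ ∪ E₂ = M₀.E := by rw [hM₀E]; exact hunion
    have ht1 : 1 ≤ t := S14.one_le_deg hGfin hv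
    have hvE₂ : ∀ e ∈ E₂, v ∉ e := fun e he hve => he.2 ⟨he.1, hve⟩
    have hstar : M.M.Indep E₁ := by
      by_contra hdep
      obtain ⟨D, hDE₁, hD⟩ := S14.exists_circuit_subset hE₁f
        (fun e he => hGdiag e (hE₁G he)) hdep
      have hDne : D.Nonempty := by
        rcases Set.eq_empty_or_nonempty D with rfl | h
        · exact absurd M.M.empty_indep hD.2.1
        · exact h
      obtain ⟨f, hf⟩ := hDne
      have hvf : v ∈ f := (hDE₁ hf).2
      obtain ⟨w, hw0⟩ := Sym2.mem_iff_exists.mp hvf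
      have hvw : v ≠ w := by
        intro h
        apply hD.1.2 f hf
        rw [hw0, ← h]
        exact Sym2.mk_isDiag_iff.mpr rfl
      have hwD : w ∈ eSupp D := ⟨f, hf, by rw [hw0]; simp⟩
      have hdegw : deg D w ≤ 1 := by
        rw [S14.deg_eq]
        refine le_trans (Set.ncard_le_ncard ?_ (Set.finite_singleton f)) (by simp)
        intro e he
        have hve : v ∈ e := (hDE₁ he.1).2
        have he' : e = s(v, w) := (Sym2.mem_and_mem_iff hvw).mp ⟨hve, he.2⟩
        rw [Set.mem_singleton_iff, he', hw0]
      have := S14.circuit_deg_ge hd hD hwD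
      omega
    have hrE₁ : mrk M.M E₁ = t := by rw [S14.mrk_indep hE₁f hstar, htE₁]
    have claimC : ∀ I F : Set (Sym2 ℕ), M.M.Indep I → I ⊆ E₂ → F ⊆ E₁ → F.ncard ≤ d →
        M.M.Indep (I ∪ F) := by
      intro I F hI hIE₂ hFE₁ hFd
      by_contra hdep
      have hIFf : (I ∪ F).Finite := (hE₂f.subset hIE₂).union (hE₁f.subset hFE₁)
      obtain ⟨D, hDIF, hD⟩ := S14.exists_circuit_subset hIFf
        (fun e he => hGdiag e (by
          rcases he with h | h
          · exact hE₂G (hIE₂ h)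
          · exact hE₁G (hFE₁ h))) hdep
      have hDF : (D ∩ F).Nonempty := by
        rw [Set.nonempty_iff_ne_empty]
        intro hempty
        have hDI : D ⊆ I := by
          intro e he
          rcases hDIF he with h | h
          · exact h
          · exfalso
            have hmem : e ∈ D ∩ F := ⟨he, h⟩
            rw [hempty] at hmem
            exact Set.notMem_empty e hmem
        exact hD.2.1 (hI.subset hDI)
      obtain ⟨f, hfD, hfF⟩ := hDF
      have hvD : v ∈ eSupp D := ⟨f, hfD, (hFE₁ hfF).2⟩
      have hdegv : deg D v ≤ d := by
        rw [S14.deg_eq]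
        refine le_trans (Set.ncard_le_ncard ?_ (hE₁f.subset hFE₁)) hFd
        intro e he
        rcases hDIF he.1 with h | h
        · exact absurd he.2 (hvE₂ e (hIE₂ h))
        · exact h
      have := S14.circuit_deg_ge hd hD hvD
      omega
    have hup : mrk M.M G ≤ mrk M.M E₂ + t := by
      calc mrk M.M G = mrk M.M (E₂ ∪ E₁) := by rw [Set.union_comm, hunion]
        _ ≤ mrk M.M E₂ + E₁.ncard := S14.mrk_union_le hE₂f hE₁f
        _ = mrk M.M E₂ + t := by rw [htE₁]
    have hdown : mrk M.M E₂ + min t d ≤ mrk M.M G := by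
      obtain ⟨I₂, hI₂E₂, hI₂, hI₂card⟩ := S14.exists_indep_mrk M.M hE₂f
      obtain ⟨F, hFE₁, hFcard⟩ := Set.exists_subset_card_eq
        (show min t d ≤ E₁.ncard by rw [htE₁]; exact min_le_left _ _)
      have hIF := claimC I₂ F hI₂ hI₂E₂ hFE₁ (by rw [hFcard]; exact min_le_right _ _)
      have hsub : I₂ ∪ F ⊆ G := Set.union_subset (hI₂E₂.trans hE₂G) (hFE₁.trans hE₁G)
      have hdisj2 : Disjoint I₂ F := Set.disjoint_of_subset hI₂E₂ hFE₁ hdisj.symm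
      have hcard : (I₂ ∪ F).ncard = mrk M.M E₂ + min t d := by
        rw [Set.ncard_union_eq hdisj2 (hE₂f.subset hI₂E₂) (hE₁f.subset hFE₁), hI₂card, hFcard]
      calc mrk M.M E₂ + min t d = (I₂ ∪ F).ncard := hcard.symm
        _ ≤ mrk M.M G := S14.le_mrk hGfin hIF hsub
    rcases Set.eq_empty_or_nonempty E₂ with hE₂e | hE₂ne
    · -- `G` is a star with center `v`
      have hGE₁ : G = E₁ := by rw [← hunion, hE₂e, Set.union_empty]
      have hrG : mrk M.M G = t := by rw [hGE₁, hrE₁]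
      have hkt : k ≤ t := hrG ▸ hrGk
      obtain ⟨e', he'G, hve'⟩ := hv
      have he₀ : e' ∈ E₁ := ⟨he'G, hve'⟩
      refine nosep 1 one_pos (by omega) {e'} (G \ {e'}) ⟨Set.disjoint_sdiff_right, ?_, ?_, ?_, ?_⟩
      · rw [hM₀E]
        exact Set.union_diff_cancel (Set.singleton_subset_iff.mpr he'G)
      · rw [hmrkres _ (Set.singleton_subset_iff.mpr he'G),
          S14.mrk_indep (Set.finite_singleton e') (hsingle e' he'G)]
        simp
      · rw [hmrkres _ Set.diff_subset]
        have hind : M.M.Indep (G \ {e'}) := hstar.subset (by rw [hGE₁]; exact Set.diff_subset)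
        rw [S14.mrk_indep hGfin.diff hind]
        have hc : (G \ {e'}).ncard + 1 = G.ncard := Set.ncard_diff_singleton_add_one he'G hGfin
        have hGt : G.ncard = t := by rw [hGE₁, htE₁]
        omega
      · rw [hmrkres _ (Set.singleton_subset_iff.mpr he'G), hmrkres _ Set.diff_subset, hM₀E,
          hmrkres G subset_rfl,
          S14.mrk_indep (Set.finite_singleton e') (hsingle e' he'G)]
        have hind : M.M.Indep (G \ {e'}) := hstar.subset (by rw [hGE₁]; exact Set.diff_subset)
        rw [S14.mrk_indep hGfin.diff hind]
        have hc : (G \ {e'}).ncard + 1 = G.ncard := Set.ncard_diff_singleton_add_one he'G hGfin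
        have hGt : G.ncard = t := by rw [hGE₁, htE₁]
        simp only [Set.ncard_singleton]
        omega
    · have hr2pos : 1 ≤ mrk M.M E₂ := by
        obtain ⟨f, hf⟩ := hE₂ne
        have h1 := S14.le_mrk hE₂f (hsingle f (hE₂G hf)) (Set.singleton_subset_iff.mpr hf)
        simpa using h1
      rcases le_or_gt (mrk M.M G) t with hrg | hrg
      · -- the star at `v` is spanning; forces `d = 1` and a contradiction
        have hrGt : mrk M.M G = t :=
          le_antisymm hrg (by rw [← hrE₁]; exact S14.mrk_mono hE₁G hGfin)
        obtain ⟨f, hf⟩ := hE₂ne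
        have hfE₁ : f ∉ E₁ := hf.2
        have hdep : ¬ M.M.Indep (insert f E₁) := by
          intro hind
          have hcard : (insert f E₁).ncard = t + 1 := by
            rw [Set.ncard_insert_of_notMem hfE₁ hE₁f, htE₁]
          have hle := S14.le_mrk hGfin hind (Set.insert_subset (hE₂G hf) hE₁G)
          rw [hcard, hrGt] at hle
          omega
        obtain ⟨D, hDsub, hD⟩ := S14.exists_circuit_subset (hE₁f.insert f)
          (fun e he => hGdiag e (by
            rcases Set.mem_insert_iff.mp he with rfl | h
            · exact hE₂G hf
            · exact hE₁G h)) hdep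
        have hfD : f ∈ D := by
          by_contra hfD
          have hDE₁ : D ⊆ E₁ := by
            intro e he
            rcases Set.mem_insert_iff.mp (hDsub he) with rfl | h
            · exact absurd he hfD
            · exact h
          exact hD.2.1 (hstar.subset hDE₁)
        have haf : f.out.1 ∈ f := Sym2.out_fst_mem f
        have haD : f.out.1 ∈ eSupp D := ⟨f, hfD, haf⟩
        have hav : f.out.1 ≠ v := fun h => hvE₂ f hf (h ▸ haf)
        have hdega : deg D f.out.1 ≤ 2 := by
          rw [S14.deg_eq]
          have hsub2 : {e ∈ D | f.out.1 ∈ e} ⊆ {s(v, f.out.1), f} := by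
            intro e he
            rcases Set.mem_insert_iff.mp (hDsub he.1) with rfl | h
            · exact Or.inr rfl
            · have he' : e = s(v, f.out.1) :=
                (Sym2.mem_and_mem_iff (Ne.symm hav)).mp ⟨h.2, he.2⟩
              exact Or.inl he'
          refine le_trans (Set.ncard_le_ncard hsub2
            ((Set.finite_singleton f).insert _)) ?_
          refine le_trans (Set.ncard_insert_le _ _) (by simp)
        have hd2 := S14.circuit_deg_ge hd hD haD
        have hkt : k ≤ t := hrGt ▸ hrGk
        omega
      · set r2 := mrk M.M E₂ with hr2def
        rcases le_or_gt t d with htd | hdt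
        · -- `t ≤ d`: a vertical 1-separation
          have hmin : min t d = t := min_eq_left htd
          rw [hmin] at hdown
          refine nosep 1 one_pos (by omega) E₁ E₂ ⟨hdisj, hunion', ?_, ?_, ?_⟩
          · rw [hmrkres E₁ hE₁G, hrE₁]; omega
          · rw [hmrkres E₂ hE₂G]; exact hr2pos
          · rw [hmrkres E₁ hE₁G, hmrkres E₂ hE₂G, hM₀E, hmrkres G subset_rfl, hrE₁]
            omega
        · -- `d < t`: a vertical `min (t - d + 1) r2`-separation
          have hmin : min t d = d := min_eq_right (le_of_lt hdt)
          rw [hmin] at hdown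
          set k' := min (t - d + 1) r2 with hk'def
          have hk'1 : 1 ≤ k' := le_min (by omega) hr2pos
          have hk'le : k' ≤ t - d + 1 := min_le_left _ _
          refine nosep k' (by omega) (by omega) E₁ E₂ ⟨hdisj, hunion', ?_, ?_, ?_⟩
          · rw [hmrkres E₁ hE₁G, hrE₁]; omega
          · rw [hmrkres E₂ hE₂G]; exact min_le_right _ _
          · rw [hmrkres E₁ hE₁G, hmrkres E₂ hE₂G, hM₀E, hmrkres G subset_rfl, hrE₁]
            rcases le_total (t - d + 1) r2 with hle | hle
            · have hk'eq : k' = t - d + 1 := min_eq_left hle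
              omega
            · have hk'eq : k' = r2 := min_eq_right hle
              omega
  refine ⟨main, ?_⟩
  have hGne : G.Nonempty := by
    rcases Set.eq_empty_or_nonempty G with hGe | h
    · exfalso
      have h0 : mrk M.M G ≤ 0 := by
        rw [hGe]
        exact le_trans (S14.mrk_le_ncard Set.finite_empty) (by simp)
      omega
    · exact h
  obtain ⟨e, he⟩ := hGne
  have hae : e.out.1 ∈ e := Sym2.out_fst_mem e
  set a := e.out.1 with hadef
  have haG : a ∈ eSupp G := ⟨e, he, hae⟩
  have hdeg := main a haG
  set f : Sym2 ℕ → ℕ := fun e' => if h : a ∈ e' then Sym2.Mem.other' h else 0 with hfdef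
  have hf1 : ∀ e' ∈ ({e' ∈ G | a ∈ e'} : Set (Sym2 ℕ)), e' = s(a, f e') := by
    intro e' he'
    rw [hfdef]
    simp only
    rw [dif_pos he'.2]
    exact (Sym2.other_spec' he'.2).symm
  have hinj : Set.InjOn f {e' ∈ G | a ∈ e'} := by
    intro p hp q hq hpq
    rw [hf1 p hp, hf1 q hq, hpq]
  have himg : f '' {e' ∈ G | a ∈ e'} ⊆ eSupp G \ {a} := by
    rintro x ⟨e', he', rfl⟩
    constructor
    · refine ⟨e', he'.1, ?_⟩
      rw [hfdef]
      simp only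
      rw [dif_pos he'.2]
      exact Sym2.other_mem' he'.2
    · intro h
      have h' : f e' = a := h
      apply hGdiag e' he'.1
      rw [hf1 e' he', h']
      exact Sym2.mk_isDiag_iff.mpr rfl
  have hsuppf : (eSupp G).Finite := S14.eSupp_finite hGfin
  have hcard : deg G a ≤ (eSupp G \ {a}).ncard := by
    rw [S14.deg_eq]
    calc ({e' ∈ G | a ∈ e'}).ncard = (f '' {e' ∈ G | a ∈ e'}).ncard :=
          (Set.ncard_image_of_injOn hinj).symm
      _ ≤ (eSupp G \ {a}).ncard := Set.ncard_le_ncard himg hsuppf.diff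
  have hsupp : (eSupp G \ {a}).ncard + 1 = (eSupp G).ncard :=
    Set.ncard_diff_singleton_add_one haG hsuppf
  omega
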